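/- Let (X,ρ) be a metric space and ζ : ℝ≥0 → ℝ≥0 a monotone nondecreasing function with ζ(0)=0, ζ(r)>0 for r>0, and lim_{r→0} ζ(λr)/ζ(r) = λ^D for all λ>0 and some D>0. Let k_ζ be the Carathéodory/Hausdorff-type outer measure built from the gauge S ↦ ζ(diam S). Then k_ζ is scale-covariant: for any map λ̂ : X → X with ρ(λ̂x, λ̂y) = λρ(x,y) for all x,y (λ > 0 fixed), k_ζ(λ̂(A)) = λ^D k_ζ(A) for every A ⊆ X. -/

import Mathlib

open scoped NNReal ENNReal
open MeasureTheory MeasureTheory.OuterMeasure Set Filter EMetric ENNReal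

lemma aux_ediam_image {X : Type*} [MetricSpace X] {L : ℝ≥0} (hL : 0 < L) {f : X → X}
    (hf : ∀ x y, edist (f x) (f y) = (L : ℝ≥0∞) * edist x y) (s : Set X) :
    Metric.ediam (f '' s) = (L : ℝ≥0∞) * Metric.ediam s := by
  have hL0 : (L : ℝ≥0∞) ≠ 0 := by exact_mod_cast hL.ne'
  refine le_antisymm ?_ ?_
  · refine EMetric.diam_le ?_
    rintro _ ⟨x, hx, rfl⟩ _ ⟨y, hy, rfl⟩
    rw [hf]
    exact mul_le_mul_right (EMetric.edist_le_diam_of_mem hx hy) _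
  · have h1 : Metric.ediam s ≤ (L : ℝ≥0∞)⁻¹ * Metric.ediam (f '' s) := by
      refine EMetric.diam_le fun x hx y hy => ?_
      have := EMetric.edist_le_diam_of_mem (mem_image_of_mem f hx) (mem_image_of_mem f hy)
      rw [hf] at this
      rw [← one_mul (edist x y), ← ENNReal.inv_mul_cancel hL0 ENNReal.coe_ne_top, mul_assoc]
      exact mul_le_mul_right this _
    calc (L : ℝ≥0∞) * Metric.ediam s ≤ (L : ℝ≥0∞) * ((L : ℝ≥0∞)⁻¹ * Metric.ediam (f '' s)) :=
          mul_le_mul_right h1 _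
      _ = Metric.ediam (f '' s) := by
          rw [← mul_assoc, ENNReal.mul_inv_cancel hL0 ENNReal.coe_ne_top, one_mul]

lemma aux_comap_dilation {X : Type*} [MetricSpace X] (m : ℝ≥0∞ → ℝ≥0∞) (hm : Monotone m)
    {L : ℝ≥0} (hL : 0 < L) {f : X → X}
    (hf : ∀ x y, edist (f x) (f y) = (L : ℝ≥0∞) * edist x y) :
    OuterMeasure.comap f (mkMetric m) = mkMetric (fun d => m ((L : ℝ≥0∞) * d)) := by
  have hL0 : (L : ℝ≥0∞) ≠ 0 := by exact_mod_cast hL.ne'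
  have himg := aux_ediam_image hL hf
  have hmono' : ∀ ε : ℝ≥0∞, Monotone fun s : { s : Set X // s.Nonempty } =>
      extend (fun t (_ : Metric.ediam t ≤ ε) => m (Metric.ediam t)) (s : Set X) := by
    intro ε s t hst
    simp only [extend, le_iInf_iff]
    intro ht
    apply le_trans _ (hm (EMetric.diam_mono hst))
    simp only [(EMetric.diam_mono hst).trans ht, le_refl, ciInf_pos]
  have key : ∀ ε : ℝ≥0∞, OuterMeasure.comap f (mkMetric'.pre (fun s => m (Metric.ediam s)) ε)
      = mkMetric'.pre (fun s => m ((L : ℝ≥0∞) * Metric.ediam s)) (ε / L) := by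
    intro ε
    rw [mkMetric'.pre, mkMetric'.pre, comap_boundedBy _ (Or.inl (hmono' ε))]
    congr with s : 1
    apply extend_congr
    · rw [himg, ENNReal.le_div_iff_mul_le (Or.inl hL0) (Or.inl ENNReal.coe_ne_top), mul_comm]
    · intros; rw [himg]
  simp only [mkMetric, mkMetric', OuterMeasure.comap_iSup]
  simp only [key]
  apply le_antisymm
  · refine iSup₂_le fun ε hε => ?_
    refine le_iSup₂_of_le (ε / L) (ENNReal.div_pos hε.ne' ENNReal.coe_ne_top) le_rfl
  · refine iSup₂_le fun ε hε => ?_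
    refine le_iSup₂_of_le ((L : ℝ≥0∞) * ε) ?_ ?_
    · exact ENNReal.mul_pos hL0 hε.ne'
    · rw [mul_comm, mul_div_assoc, ENNReal.div_self hL0 ENNReal.coe_ne_top, mul_one]

/-- the Carathéodory outer measure built from a gauge `ζ` that is regularly
varying at 0 with index `D > 0` is scale-covariant: `k_ζ(λ̂(A)) = λ^D · k_ζ(A)`. -/
theorem stmt_13 {X : Type*} [MetricSpace X]
    (ζ : NNReal → NNReal) (hmono : Monotone ζ) (h0 : ζ 0 = 0)
    (hpos : ∀ r : NNReal, 0 < r → 0 < ζ r)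
    (D : ℝ) (hD : 0 < D)
    (hreg : ∀ c : NNReal, 0 < c → Filter.Tendsto
      (fun r : NNReal => (ζ (c * r) : ℝ) / (ζ r : ℝ))
      (nhdsWithin 0 (Set.Ioi 0)) (nhds ((c : ℝ) ^ D)))
    (μ : MeasureTheory.OuterMeasure X)
    (hμ : μ = MeasureTheory.OuterMeasure.mkMetric
      (fun d : ENNReal => (ζ d.toNNReal : ENNReal)))
    (l : ℝ) (hl : 0 < l) (f : X → X)
    (hf : ∀ x y : X, dist (f x) (f y) = l * dist x y) :
    ∀ A : Set X, μ (f '' A) = ENNReal.ofReal (l ^ D) * μ A := by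
  intro A
  set c : ℝ := l ^ D with hc
  have hc0 : 0 < c := Real.rpow_pos_of_pos hl D
  set Lc : ℝ≥0 := ⟨l, hl.le⟩ with hLc
  have hLc0 : 0 < Lc := hl
  have hLcR : (Lc : ℝ) = l := rfl
  have hLcne0 : (Lc : ℝ≥0∞) ≠ 0 := by exact_mod_cast hLc0.ne'
  have hfe : ∀ x y, edist (f x) (f y) = (Lc : ℝ≥0∞) * edist x y := by
    intro x y
    rw [edist_dist, edist_dist, hf, ENNReal.ofReal_mul hl.le]
    congr 1
    rw [← hLcR, ENNReal.ofReal_coe_nnreal]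
  -- a monotone gauge agreeing with the given one near `0`
  set m' : ℝ≥0∞ → ℝ≥0∞ := fun d => (ζ ((min d 1).toNNReal) : ℝ≥0∞) with hm'
  have hm'mono : Monotone m' := by
    intro a b hab
    have hb : min b 1 ≠ ∞ := ne_top_of_le_ne_top ENNReal.one_ne_top (min_le_right _ _)
    simp only [hm']
    exact_mod_cast hmono (ENNReal.toNNReal_mono hb (min_le_min hab le_rfl))
  have hμ' : μ = (mkMetric m' : OuterMeasure X) := by
    rw [hμ]
    have hev : (fun d : ℝ≥0∞ => (ζ d.toNNReal : ℝ≥0∞)) =ᶠ[nhds 0] m' := by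
      filter_upwards [Iic_mem_nhds zero_lt_one] with d hd
      simp only [hm', min_eq_left (Set.mem_Iic.mp hd)]
    exact le_antisymm (mkMetric_mono hev.le) (mkMetric_mono hev.symm.le)
  set m₁ : ℝ≥0∞ → ℝ≥0∞ := fun d => m' ((Lc : ℝ≥0∞) * d) with hm₁
  have himage : μ (f '' A) = (mkMetric m₁ : OuterMeasure X) A := by
    rw [hμ', ← OuterMeasure.comap_apply, aux_comap_dilation m' hm'mono hLc0 hfe]
  set x := (mkMetric m₁ : OuterMeasure X) A with hx
  set y := (mkMetric m' : OuterMeasure X) A with hy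
  rw [himage, hμ']
  show x = ENNReal.ofReal c * y
  -- two-sided bounds for every ε ∈ (0, c)
  have hbound : ∀ ε : ℝ, 0 < ε → ε < c →
      x ≤ ENNReal.ofReal (c + ε) * y ∧ ENNReal.ofReal (c - ε) * y ≤ x := by
    intro ε hε hεc
    have htend := hreg Lc hLc0
    rw [hLcR, ← hc] at htend
    have hev2 : ∀ᶠ r in nhdsWithin 0 (Set.Ioi 0),
        ((ζ (Lc * r) : ℝ) / (ζ r : ℝ)) ∈ Set.Ioo (c - ε) (c + ε) :=
      htend.eventually_mem (Ioo_mem_nhds (by linarith) (by linarith))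
    obtain ⟨δ, hδ0, hδ⟩ := (nhdsWithin_hasBasis NNReal.nhds_zero_basis (Set.Ioi 0)).eventually_iff.mp hev2
    set δ' : ℝ≥0∞ := min (min (δ : ℝ≥0∞) 1) (Lc : ℝ≥0∞)⁻¹ with hδ'
    have hδ'0 : 0 < δ' := by
      refine lt_min (lt_min ?_ ?_) ?_
      · exact_mod_cast hδ0
      · exact zero_lt_one
      · exact ENNReal.inv_pos.mpr ENNReal.coe_ne_top
    have hkey : ∀ d : ℝ≥0∞, d < δ' →
        m₁ d ≤ ENNReal.ofReal (c + ε) * m' d ∧ ENNReal.ofReal (c - ε) * m' d ≤ m₁ d := by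
      intro d hd
      rcases eq_or_lt_of_le (zero_le : 0 ≤ d) with h0d | h0d
      · have : m' 0 = 0 := by simp [hm', h0]
        constructor <;> simp [hm₁, ← h0d, this]
      · have hd1 : d ≤ 1 :=
          (hd.le.trans ((min_le_left _ _).trans (min_le_right _ _)))
        have hdL : (Lc : ℝ≥0∞) * d ≤ 1 := by
          have hdi : d ≤ (Lc : ℝ≥0∞)⁻¹ := hd.le.trans (min_le_right _ _)
          calc (Lc : ℝ≥0∞) * d ≤ (Lc : ℝ≥0∞) * (Lc : ℝ≥0∞)⁻¹ := mul_le_mul_right hdi _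
            _ = 1 := ENNReal.mul_inv_cancel hLcne0 ENNReal.coe_ne_top
        have hdtop : d ≠ ∞ := ne_top_of_le_ne_top ENNReal.one_ne_top hd1
        set r : ℝ≥0 := d.toNNReal with hr
        have hdr : d = (r : ℝ≥0∞) := (ENNReal.coe_toNNReal hdtop).symm
        have hr0 : 0 < r := ENNReal.toNNReal_pos h0d.ne' hdtop
        have hrδ : r < δ := by
          have : d < (δ : ℝ≥0∞) := hd.trans_le ((min_le_left _ _).trans (min_le_left _ _))
          rw [hdr] at this
          exact_mod_cast this
        have hratio := hδ (Set.mem_inter hrδ hr0)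
        have hdL' : ((Lc * r : ℝ≥0) : ℝ≥0∞) ≤ 1 := by
          rw [hdr] at hdL; rw [ENNReal.coe_mul]; exact hdL
        have e1 : m₁ d = (ζ (Lc * r) : ℝ≥0∞) := by
          simp only [hm₁, hm', hdr, ← ENNReal.coe_mul, min_eq_left hdL', ENNReal.toNNReal_coe]
        have e2 : m' d = (ζ r : ℝ≥0∞) := by
          rw [hdr] at hd1 ⊢
          simp [hm', min_eq_left hd1]
        have hζr : (0 : ℝ) < (ζ r : ℝ) := hpos r hr0
        have hup : (ζ (Lc * r) : ℝ) ≤ (c + ε) * (ζ r : ℝ) :=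
          ((div_lt_iff₀ hζr).mp hratio.2).le
        have hlo : (c - ε) * (ζ r : ℝ) ≤ (ζ (Lc * r) : ℝ) :=
          ((lt_div_iff₀ hζr).mp hratio.1).le
        constructor
        · rw [e1, e2, ← ENNReal.ofReal_coe_nnreal (p := ζ (Lc * r)),
            ← ENNReal.ofReal_coe_nnreal (p := ζ r), ← ENNReal.ofReal_mul (by linarith)]
          exact ENNReal.ofReal_le_ofReal hup
        · rw [e1, e2, ← ENNReal.ofReal_coe_nnreal (p := ζ (Lc * r)),
            ← ENNReal.ofReal_coe_nnreal (p := ζ r), ← ENNReal.ofReal_mul (by linarith : (0:ℝ) ≤ c - ε)]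
          exact ENNReal.ofReal_le_ofReal hlo
    have hmem : ∀ᶠ d in nhdsWithin 0 (Set.Ici 0), d < δ' :=
      Filter.Eventually.filter_mono nhdsWithin_le_nhds
        (Filter.Tendsto.eventually_lt_const hδ'0 tendsto_id)
    constructor
    · have hsmul : (mkMetric m₁ : OuterMeasure X) ≤ ENNReal.ofReal (c + ε) • mkMetric m' := by
        refine mkMetric_mono_smul ENNReal.ofReal_ne_top ?_ ?_
        · simp only [ne_eq, ENNReal.ofReal_eq_zero, not_le]; linarith
        · filter_upwards [hmem] with d hd
          simpa using (hkey d hd).1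
      simpa using hsmul A
    · have hsmul : (mkMetric m' : OuterMeasure X) ≤ ENNReal.ofReal (c - ε)⁻¹ • mkMetric m₁ := by
        refine mkMetric_mono_smul ENNReal.ofReal_ne_top ?_ ?_
        · simp only [ne_eq, ENNReal.ofReal_eq_zero, not_le]
          exact inv_pos.mpr (by linarith)
        · filter_upwards [hmem] with d hd
          have h2 := (hkey d hd).2
          have : m' d = ENNReal.ofReal (c - ε)⁻¹ * (ENNReal.ofReal (c - ε) * m' d) := by
            rw [← mul_assoc, ← ENNReal.ofReal_mul (inv_nonneg.mpr (by linarith)),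
              inv_mul_cancel₀ (by linarith : c - ε ≠ 0), ENNReal.ofReal_one, one_mul]
          calc m' d = ENNReal.ofReal (c - ε)⁻¹ * (ENNReal.ofReal (c - ε) * m' d) := this
            _ ≤ ENNReal.ofReal (c - ε)⁻¹ * m₁ d := mul_le_mul_right h2 _
            _ = (ENNReal.ofReal (c - ε)⁻¹ • m₁) d := rfl
      have hyx : y ≤ ENNReal.ofReal (c - ε)⁻¹ * x := by simpa using hsmul A
      calc ENNReal.ofReal (c - ε) * y ≤ ENNReal.ofReal (c - ε) * (ENNReal.ofReal (c - ε)⁻¹ * x) :=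
            mul_le_mul_right hyx _
        _ = x := by
            rw [← mul_assoc, ← ENNReal.ofReal_mul (by linarith),
              mul_inv_cancel₀ (by linarith : c - ε ≠ 0), ENNReal.ofReal_one, one_mul]
  -- squeeze as ε → 0⁺
  have hofc : ENNReal.ofReal c ≠ 0 := by
    simp only [ne_eq, ENNReal.ofReal_eq_zero, not_le]; exact hc0
  have t1 : Filter.Tendsto (fun ε : ℝ => ENNReal.ofReal (c + ε) * y)
      (nhdsWithin 0 (Set.Ioi 0)) (nhds (ENNReal.ofReal c * y)) := by
    refine ENNReal.Tendsto.mul_const ?_ (Or.inl hofc)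
    have h1 : Filter.Tendsto (fun ε : ℝ => c + ε) (nhdsWithin 0 (Set.Ioi 0)) (nhds c) := by
      have ht : Filter.Tendsto (fun ε : ℝ => c + ε) (nhds 0) (nhds (c + 0)) :=
        tendsto_const_nhds.add tendsto_id
      simpa using ht.mono_left nhdsWithin_le_nhds
    exact (ENNReal.continuous_ofReal.tendsto c).comp h1
  have t2 : Filter.Tendsto (fun ε : ℝ => ENNReal.ofReal (c - ε) * y)
      (nhdsWithin 0 (Set.Ioi 0)) (nhds (ENNReal.ofReal c * y)) := by
    refine ENNReal.Tendsto.mul_const ?_ (Or.inl hofc)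
    have h1 : Filter.Tendsto (fun ε : ℝ => c - ε) (nhdsWithin 0 (Set.Ioi 0)) (nhds c) := by
      have ht : Filter.Tendsto (fun ε : ℝ => c - ε) (nhds 0) (nhds (c - 0)) :=
        tendsto_const_nhds.sub tendsto_id
      simpa using ht.mono_left nhdsWithin_le_nhds
    exact (ENNReal.continuous_ofReal.tendsto c).comp h1
  refine le_antisymm (ge_of_tendsto t1 ?_) (le_of_tendsto t2 ?_)
  · filter_upwards [Ioo_mem_nhdsGT hc0] with ε hε
    exact (hbound ε hε.1 hε.2).1
  · filter_upwards [Ioo_mem_nhdsGT hc0] with ε hε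
    exact (hbound ε hε.1 hε.2).2
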